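/- Let S be a linear subspace of End(ℂ^D) that is an algebra (closed under multiplication) consisting entirely of nilpotent matrices. Then the product of any D elements of S is zero. -/

import Mathlib

theorem stmt11 (D : ℕ) (S : Submodule ℂ (Matrix (Fin D) (Fin D) ℂ))
    (hmul : ∀ A ∈ S, ∀ B ∈ S, A * B ∈ S)
    (hnil : ∀ A ∈ S, IsNilpotent A) :
    ∀ l : List (Matrix (Fin D) (Fin D) ℂ),
      (∀ A ∈ l, A ∈ S) → l.length = D → l.prod = 0 := by
  classical
  let φ : Matrix (Fin D) (Fin D) ℂ ≃ₐ[ℂ] Module.End ℂ (Fin D → ℂ) :=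
    Matrix.toLinAlgEquiv'
  let S' : Submodule ℂ (Module.End ℂ (Fin D → ℂ)) := S.map φ.toLinearMap
  have memS' : ∀ {x}, x ∈ S' ↔ ∃ A ∈ S, φ A = x := by
    intro x
    simp [S', Submodule.mem_map]
    constructor
    · intro h; exact ⟨_, h, φ.apply_symm_apply x⟩
    · rintro ⟨A, hA, rfl⟩; simpa using hA
  have hmul' : ∀ x ∈ S', ∀ y ∈ S', x * y ∈ S' := by
    intro x hx y hy
    obtain ⟨A, hA, rfl⟩ := memS'.mp hx
    obtain ⟨B, hB, rfl⟩ := memS'.mp hy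
    exact memS'.mpr ⟨A * B, hmul A hA B hB, map_mul φ A B⟩
  letI := LieRing.ofAssociativeRing (A := Module.End ℂ (Fin D → ℂ))
  let L : LieSubalgebra ℂ (Module.End ℂ (Fin D → ℂ)) :=
    { S' with
      lie_mem' := by
        intro x y hx hy
        have h : ⁅x, y⁆ = x * y - y * x := rfl
        rw [h]
        exact sub_mem (hmul' x hx y hy) (hmul' y hy x hx) }
  have memL : ∀ {x}, x ∈ L ↔ x ∈ S' := Iff.rfl
  -- Engel's theorem: the Lie module `Fin D → ℂ` over `L` is nilpotent
  have hEngel : LieModule.IsNilpotent L (Fin D → ℂ) := by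
    rw [LieModule.isNilpotent_iff_forall' (R := ℂ)]
    rintro ⟨x, hx⟩
    obtain ⟨A, hA, rfl⟩ := memS'.mp hx
    have hxn : IsNilpotent (φ A) := (hnil A hA).map φ
    have h : LieModule.toEnd ℂ (↥L) (Fin D → ℂ) ⟨φ A, hx⟩ = φ A :=
      LinearMap.ext fun m => rfl
    rw [h]
    exact hxn
  obtain ⟨k, hk⟩ := (LieModule.isNilpotent_iff ℂ L (Fin D → ℂ)).mp hEngel
  -- the lower central series stabilizes once two consecutive terms agree
  have hstab : ∀ n, LieModule.lowerCentralSeries ℂ (↥L) (Fin D → ℂ) (n + 1)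
      = LieModule.lowerCentralSeries ℂ (↥L) (Fin D → ℂ) n →
      ∀ m, n ≤ m → LieModule.lowerCentralSeries ℂ (↥L) (Fin D → ℂ) m
        = LieModule.lowerCentralSeries ℂ (↥L) (Fin D → ℂ) n := by
    intro n hn m hm
    induction m with
    | zero =>
      have hn0 : n = 0 := by omega
      rw [hn0]
    | succ m ih =>
      rcases Nat.lt_or_ge n (m + 1) with h | h
      · have hmn : n ≤ m := by omega
        have hmeq := ih hmn
        calc LieModule.lowerCentralSeries ℂ (↥L) (Fin D → ℂ) (m + 1)
            = ⁅(⊤ : LieIdeal ℂ L), LieModule.lowerCentralSeries ℂ (↥L) (Fin D → ℂ) m⁆ :=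
              LieModule.lowerCentralSeries_succ ℂ L (Fin D → ℂ) m
          _ = ⁅(⊤ : LieIdeal ℂ L), LieModule.lowerCentralSeries ℂ (↥L) (Fin D → ℂ) n⁆ := by rw [hmeq]
          _ = LieModule.lowerCentralSeries ℂ (↥L) (Fin D → ℂ) (n + 1) :=
              (LieModule.lowerCentralSeries_succ ℂ L (Fin D → ℂ) n).symm
          _ = LieModule.lowerCentralSeries ℂ (↥L) (Fin D → ℂ) n := hn
      · have h' : n = m + 1 := by omega
        rw [h']
  -- hence the series reaches `⊥` after at most `D` steps
  have hD : LieModule.lowerCentralSeries ℂ (↥L) (Fin D → ℂ) D = ⊥ := by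
    rcases le_or_gt k D with hkD | hkD
    · have hle := LieModule.antitone_lowerCentralSeries ℂ (↥L) (Fin D → ℂ) hkD
      rw [hk] at hle
      exact le_bot_iff.mp hle
    · by_cases hstep : ∃ n < D, LieModule.lowerCentralSeries ℂ (↥L) (Fin D → ℂ) (n + 1)
        = LieModule.lowerCentralSeries ℂ (↥L) (Fin D → ℂ) n
      · obtain ⟨n, hnD, hn⟩ := hstep
        have h1 := hstab n hn k (by omega)
        have h2 := hstab n hn D (by omega)
        rw [h2, ← h1, hk]
      · push_neg at hstep
        -- strict descent: ranks drop at every step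
        have hrank : ∀ n, n ≤ D →
            Module.finrank ℂ (LieModule.lowerCentralSeries ℂ (↥L) (Fin D → ℂ) n :
              Submodule ℂ (Fin D → ℂ)) + n ≤ D := by
          intro n hn
          induction n with
          | zero =>
            simp
            exact (Submodule.finrank_le _).trans (by simp)
          | succ n ih =>
            have hlt : LieModule.lowerCentralSeries ℂ (↥L) (Fin D → ℂ) (n + 1)
                < LieModule.lowerCentralSeries ℂ (↥L) (Fin D → ℂ) n :=
              lt_of_le_of_ne
                (LieModule.antitone_lowerCentralSeries ℂ (↥L) (Fin D → ℂ) (Nat.le_succ n))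
                (hstep n (by omega))
            have hlt' : (LieModule.lowerCentralSeries ℂ (↥L) (Fin D → ℂ) (n + 1) :
                Submodule ℂ (Fin D → ℂ)) < LieModule.lowerCentralSeries ℂ (↥L) (Fin D → ℂ) n := hlt
            have h1 := Submodule.finrank_lt_finrank_of_lt hlt'
            have h2 := ih (by omega)
            omega
        have h0 : Module.finrank ℂ (LieModule.lowerCentralSeries ℂ (↥L) (Fin D → ℂ) D :
            Submodule ℂ (Fin D → ℂ)) = 0 := by
          have := hrank D le_rfl; omega
        have hbot : (LieModule.lowerCentralSeries ℂ (↥L) (Fin D → ℂ) D :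
            Submodule ℂ (Fin D → ℂ)) = ⊥ := Submodule.finrank_eq_zero.mp h0
        exact (LieSubmodule.toSubmodule_inj _ _).mp (by simpa using hbot)
  -- products of `n` elements of `S` map everything into the `n`-th term of the series
  have key : ∀ l : List (Matrix (Fin D) (Fin D) ℂ), (∀ A ∈ l, A ∈ S) →
      ∀ v : Fin D → ℂ, φ l.prod v ∈ LieModule.lowerCentralSeries ℂ (↥L) (Fin D → ℂ) l.length := by
    intro l
    induction l with
    | nil => intro _ v; simp
    | cons A t ih =>
      intro hmem v
      have hA : A ∈ S := hmem A (List.mem_cons_self)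
      have ht : ∀ B ∈ t, B ∈ S := fun B hB => hmem B (List.mem_cons_of_mem A hB)
      have h1 : φ (A :: t).prod v = φ A (φ t.prod v) := by
        rw [List.prod_cons, map_mul]
        rfl
      rw [h1]
      have hm : φ t.prod v ∈ LieModule.lowerCentralSeries ℂ (↥L) (Fin D → ℂ) t.length := ih ht v
      have hAx : φ A ∈ L := memS'.mpr ⟨A, hA, rfl⟩
      have h2 : φ A (φ t.prod v) = ⁅(⟨φ A, hAx⟩ : L), φ t.prod v⁆ := rfl
      rw [h2]
      show _ ∈ LieModule.lowerCentralSeries ℂ (↥L) (Fin D → ℂ) (t.length + 1)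
      rw [LieModule.lowerCentralSeries_succ]
      exact LieSubmodule.lie_mem_lie (LieSubmodule.mem_top _) hm
  intro l hl hlen
  have hz : ∀ v : Fin D → ℂ, φ l.prod v = 0 := by
    intro v
    have := key l hl v
    rw [hlen, hD] at this
    simpa using this
  have h1 : φ l.prod = 0 := LinearMap.ext hz
  have h2 : φ l.prod = φ 0 := by rw [h1, map_zero]
  exact φ.injective h2
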